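/- Let {α_j} be an interpolating sequence with δ_n arranged so that δ_n → 1 and Σ_n (1-δ_n²)^{p/2} < ∞ for some 2 ≤ p < ∞. Suppose there is a constant C such that for every N, the operator norm of G_N - I (the Gram matrix of the tail sequence {α_j}_{j≥N} minus the identity) is at most C√(1-δ_N). Then G - I is in the Schatten p-class. -/

import Mathlib

noncomputable abbrev ellTwo : Type := lp (fun _ : ℕ => ℂ) 2

/-- The `n`-th approximation number (singular value) of `T`. -/
noncomputable def approxNumber (T : ellTwo →L[ℂ] ellTwo) (n : ℕ) : ℝ :=
  sInf {c : ℝ | ∃ F : ellTwo →L[ℂ] ellTwo,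
    LinearMap.rank (F : ellTwo →ₗ[ℂ] ellTwo) ≤ (n : Cardinal) ∧ c = ‖T - F‖}

/-- `T` is in the Schatten `p`-class: compact with `p`-summable singular values. -/
def MemSchatten (p : ℝ) (T : ellTwo →L[ℂ] ellTwo) : Prop :=
  IsCompactOperator T ∧ Summable (fun n : ℕ => approxNumber T n ^ p)

/-- The Gram matrix entry `⟨g_j, g_i⟩` of the normalized Szegő kernels at `α i, α j`. -/
noncomputable def gramEntry (α : ℕ → ℂ) (i j : ℕ) : ℂ :=
  ((Real.sqrt ((1 - ‖α i‖ ^ 2) * (1 - ‖α j‖ ^ 2)) : ℝ) : ℂ) /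
    (1 - (starRingEnd ℂ) (α i) * α j)

namespace GramAux


noncomputable def ee (i : ℕ) : ellTwo := lp.single 2 i (1:ℂ)

lemma inner_ee (i : ℕ) (x : ellTwo) : (inner ℂ (ee i) x : ℂ) = x i := by
  rw [ee, lp.inner_single_left]; simp

lemma ee_apply (j i : ℕ) : (ee j) i = if i = j then (1:ℂ) else 0 := by
  rw [ee, lp.single_apply]; simp [Pi.single_apply]

lemma ext_vec {x y : ellTwo} (h : ∀ i, x i = y i) : x = y := by
  apply lp.ext; funext i; exact h i

lemma ext_entries {A B : ellTwo →L[ℂ] ellTwo}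
    (h : ∀ i j, (inner ℂ (ee i) (A (ee j)) : ℂ) = inner ℂ (ee i) (B (ee j))) : A = B := by
  have hadj : ∀ i, (ContinuousLinearMap.adjoint A) (ee i) =
      (ContinuousLinearMap.adjoint B) (ee i) := by
    intro i
    apply ext_vec
    intro k
    rw [← inner_ee k, ← inner_ee k, ContinuousLinearMap.adjoint_inner_right,
      ContinuousLinearMap.adjoint_inner_right]
    calc (inner ℂ (A (ee k)) (ee i) : ℂ) = starRingEnd ℂ (inner ℂ (ee i) (A (ee k))) :=
          (inner_conj_symm _ _).symm
      _ = starRingEnd ℂ (inner ℂ (ee i) (B (ee k))) := by rw [h]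
      _ = inner ℂ (B (ee k)) (ee i) := inner_conj_symm _ _
  ext x i
  show (A x) i = (B x) i
  rw [← inner_ee i, ← inner_ee i, ← ContinuousLinearMap.adjoint_inner_left A,
    ← ContinuousLinearMap.adjoint_inner_left B, hadj]

/-- Projection onto the first `N` coordinates. -/
noncomputable def proj (N : ℕ) : ellTwo →L[ℂ] ellTwo :=
  ∑ k ∈ Finset.range N, (innerSL ℂ (ee k)).smulRight (ee k)

lemma inner_proj (N i : ℕ) (x : ellTwo) :
    (inner ℂ (ee i) (proj N x) : ℂ) = if i < N then x i else 0 := by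
  rw [proj, ContinuousLinearMap.sum_apply, inner_sum]
  have : ∀ k ∈ Finset.range N,
      (inner ℂ (ee i) (((innerSL ℂ (ee k)).smulRight (ee k)) x) : ℂ)
        = if k = i then x k else 0 := by
    intro k _
    rw [ContinuousLinearMap.smulRight_apply, inner_smul_right, innerSL_apply_apply, inner_ee,
      inner_ee, ee_apply]
    by_cases h : i = k <;> simp [h, eq_comm]
  rw [Finset.sum_congr rfl this, Finset.sum_ite_eq' (Finset.range N) i]
  simp [Finset.mem_range]

lemma proj_coord (N : ℕ) (x : ellTwo) (i : ℕ) :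
    (proj N x) i = if i < N then x i else 0 := by
  rw [← inner_ee i, inner_proj]

lemma proj_single (N j : ℕ) : proj N (ee j) = if j < N then ee j else 0 := by
  apply ext_vec
  intro i
  rw [proj_coord, ee_apply]
  by_cases hj : j < N <;> by_cases hij : i = j <;>
    simp [hj, hij, lp.coeFn_zero, ee_apply]

lemma rank_proj (N : ℕ) :
    LinearMap.rank ((proj N : ellTwo →L[ℂ] ellTwo) : ellTwo →ₗ[ℂ] ellTwo) ≤ (N : Cardinal) := by
  have hr : LinearMap.range ((proj N : ellTwo →L[ℂ] ellTwo) : ellTwo →ₗ[ℂ] ellTwo)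
      ≤ Submodule.span ℂ (ee '' ↑(Finset.range N)) := by
    rintro y ⟨x, rfl⟩
    show proj N x ∈ _
    rw [proj, ContinuousLinearMap.sum_apply]
    refine Submodule.sum_mem _ ?_
    intro k hk
    rw [ContinuousLinearMap.smulRight_apply]
    exact Submodule.smul_mem _ _ (Submodule.subset_span ⟨k, by simpa using hk, rfl⟩)
  calc LinearMap.rank ((proj N : ellTwo →L[ℂ] ellTwo) : ellTwo →ₗ[ℂ] ellTwo)
      ≤ Module.rank ℂ (Submodule.span ℂ (ee '' ↑(Finset.range N))) := Submodule.rank_mono hr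
    _ ≤ Cardinal.mk (ee '' ↑(Finset.range N)) := rank_span_le _
    _ ≤ Cardinal.mk (↑(Finset.range N) : Set ℕ) := Cardinal.mk_image_le
    _ = (N : Cardinal) := by simp

lemma isCompact_proj (N : ℕ) : IsCompactOperator (proj N) := by
  rw [proj]
  induction (Finset.range N) using Finset.cons_induction with
  | empty => simpa using isCompactOperator_zero
  | cons a s ha ih =>
      rw [Finset.sum_cons]
      have h1 : IsCompactOperator ((innerSL ℂ (ee a)).smulRight (ee a)) := by
        have hg : IsCompactOperator (ContinuousLinearMap.toSpanSingleton ℂ (ee a)) := by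
          refine ⟨ContinuousLinearMap.toSpanSingleton ℂ (ee a) '' Metric.closedBall 0 1,
            (ProperSpace.isCompact_closedBall _ _).image
              (ContinuousLinearMap.toSpanSingleton ℂ (ee a)).continuous, ?_⟩
          exact Filter.mem_of_superset (Metric.closedBall_mem_nhds _ one_pos)
            fun z hz => Set.mem_image_of_mem _ hz
        have := hg.comp_clm (innerSL ℂ (ee a))
        convert this using 1
        · rfl
        · ext x; simp [ContinuousLinearMap.smulRight_apply]
      have := h1.add ih
      convert this using 1
      · rfl
      · simp

lemma summ2 (x : ellTwo) : Summable (fun i => ‖x i‖ ^ (2:ℝ)) :=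
  (lp.memℓp x).summable (by norm_num)

lemma memtail (N : ℕ) (x : ellTwo) : Memℓp (fun j => x (j + N)) 2 := by
  apply memℓp_gen
  have : Summable (fun j : ℕ => ‖x (j + N)‖ ^ (2:ℝ)) :=
    (summ2 x).comp_injective (add_left_injective N)
  simpa using this

lemma sq_le_imp {a b : ℝ} (ha : 0 ≤ a) (hb : 0 ≤ b) (h : a ^ (2:ℝ) ≤ b ^ (2:ℝ)) : a ≤ b := by
  rw [show ((2:ℝ)) = ((2:ℕ):ℝ) by norm_num, Real.rpow_natCast, Real.rpow_natCast] at h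
  nlinarith

/-- The operator `x ↦ (x (j+N))_j` (adjoint of the `N`-fold shift). -/
noncomputable def shiftL (N : ℕ) : ellTwo →L[ℂ] ellTwo :=
  LinearMap.mkContinuous
    { toFun := fun x => ⟨fun j => x (j + N), memtail N x⟩
      map_add' := by intro a b; ext j; simp [lp.coeFn_add]; rfl
      map_smul' := by intro c a; ext j; simp [lp.coeFn_smul] }
    1
    (by
      intro x
      rw [one_mul]
      have hn : ∀ (y : ellTwo), ‖y‖ ^ (2:ℝ) = ∑' i, ‖y i‖ ^ (2:ℝ) := by
        intro y
        have := lp.norm_rpow_eq_tsum (p := 2) (by norm_num) y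
        simpa using this
      have hle : ‖(⟨fun j => x (j + N), memtail N x⟩ : ellTwo)‖ ^ (2:ℝ) ≤ ‖x‖ ^ (2:ℝ) := by
        rw [hn, hn]
        refine Summable.tsum_le_tsum_of_inj (fun j => j + N) (add_left_injective N)
          (fun i _ => by positivity) (fun j => le_refl _) ?_ (summ2 x)
        exact (summ2 x).comp_injective (add_left_injective N)
      exact sq_le_imp (norm_nonneg _) (norm_nonneg _) hle)

lemma shiftL_apply (N : ℕ) (x : ellTwo) (j : ℕ) : (shiftL N x) j = x (j + N) := rfl

lemma shiftL_norm_le (N : ℕ) : ‖shiftL N‖ ≤ 1 :=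
  LinearMap.mkContinuous_norm_le _ zero_le_one _

lemma shiftL_single (N j : ℕ) :
    shiftL N (ee j) = if N ≤ j then ee (j - N) else 0 := by
  apply ext_vec
  intro k
  rw [shiftL_apply, ee_apply]
  by_cases hN : N ≤ j
  · simp only [hN, if_true, ee_apply]
    by_cases hk : k = j - N
    · simp [hk, Nat.sub_add_cancel hN, eq_comm]
    · have : ¬ (k + N = j) := fun h => hk (by omega)
      simp [this, hk]
  · have : ¬ (k + N = j) := by omega
    simp [hN, this, lp.coeFn_zero]

lemma inner_Q (N i : ℕ) (x : ellTwo) :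
    (inner ℂ (ee i) (((1 : ellTwo →L[ℂ] ellTwo) - proj N) x) : ℂ)
      = if i < N then 0 else x i := by
  rw [ContinuousLinearMap.sub_apply, inner_sub_right, inner_proj, inner_ee,
    ContinuousLinearMap.one_apply]
  by_cases h : i < N <;> simp [h]

noncomputable def compress (N : ℕ) (B : ellTwo →L[ℂ] ellTwo) : ellTwo →L[ℂ] ellTwo :=
  (ContinuousLinearMap.adjoint (shiftL N)).comp (B.comp (shiftL N))

lemma norm_compress_le (N : ℕ) (B : ellTwo →L[ℂ] ellTwo) : ‖compress N B‖ ≤ ‖B‖ := by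
  have h1 : ‖ContinuousLinearMap.adjoint (shiftL N)‖ = ‖shiftL N‖ :=
    LinearIsometryEquiv.norm_map _ _
  calc ‖compress N B‖ ≤ ‖ContinuousLinearMap.adjoint (shiftL N)‖ * ‖B.comp (shiftL N)‖ :=
        ContinuousLinearMap.opNorm_comp_le _ _
    _ ≤ ‖ContinuousLinearMap.adjoint (shiftL N)‖ * (‖B‖ * ‖shiftL N‖) := by
        refine mul_le_mul_of_nonneg_left (ContinuousLinearMap.opNorm_comp_le _ _)
          (norm_nonneg _)
    _ ≤ 1 * (‖B‖ * 1) := by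
        refine mul_le_mul (h1 ▸ shiftL_norm_le N)
          (mul_le_mul_of_nonneg_left (shiftL_norm_le N) (norm_nonneg _)) ?_ zero_le_one
        positivity
    _ = ‖B‖ := by ring

lemma entry_compress (N : ℕ) (B : ellTwo →L[ℂ] ellTwo) (i j : ℕ) :
    (inner ℂ (ee i) (compress N B (ee j)) : ℂ)
      = if N ≤ i ∧ N ≤ j then (inner ℂ (ee (i - N)) (B (ee (j - N))) : ℂ) else 0 := by
  rw [compress, ContinuousLinearMap.comp_apply, ContinuousLinearMap.comp_apply,
    ContinuousLinearMap.adjoint_inner_right, shiftL_single, shiftL_single]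
  by_cases hi : N ≤ i <;> by_cases hj : N ≤ j <;> simp [hi, hj]

lemma compress_decomp (N : ℕ) (A B : ellTwo →L[ℂ] ellTwo)
    (h : ∀ i j, N ≤ i → N ≤ j →
      (inner ℂ (ee i) (A (ee j)) : ℂ) = inner ℂ (ee (i - N)) (B (ee (j - N)))) :
    A - compress N B
      = (proj N).comp A + ((((1 : ellTwo →L[ℂ] ellTwo) - proj N).comp A).comp (proj N)) := by
  apply ext_entries
  intro i j
  rw [ContinuousLinearMap.sub_apply, inner_sub_right, entry_compress,
    ContinuousLinearMap.add_apply, inner_add_right, ContinuousLinearMap.comp_apply,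
    ContinuousLinearMap.comp_apply, ContinuousLinearMap.comp_apply]
  have h1 : (inner ℂ (ee i) (proj N (A (ee j))) : ℂ)
      = if i < N then inner ℂ (ee i) (A (ee j)) else 0 := by
    rw [inner_proj, inner_ee]
  have h2 : (inner ℂ (ee i) (((1 : ellTwo →L[ℂ] ellTwo) - proj N) (A (proj N (ee j)))) : ℂ)
      = if i < N then 0 else if j < N then (inner ℂ (ee i) (A (ee j)) : ℂ) else 0 := by
    rw [inner_Q, proj_single]
    by_cases hj : j < N
    · simp only [hj, if_true]
      rw [inner_ee]
    · simp [hj, lp.coeFn_zero]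
  rw [h1, h2]
  by_cases hi : N ≤ i <;> by_cases hj : N ≤ j
  · rw [h i j hi hj]; simp [hi, hj, Nat.not_lt.mpr hi, Nat.not_lt.mpr hj]
  · simp [hi, hj, Nat.not_lt.mpr hi, Nat.not_le.mp hj]
  · simp [hi, hj, Nat.not_le.mp hi]
  · simp [hi, hj, Nat.not_le.mp hi]

lemma rank_decomp (N : ℕ) (A : ellTwo →L[ℂ] ellTwo) :
    LinearMap.rank ((((proj N).comp A
        + ((((1 : ellTwo →L[ℂ] ellTwo) - proj N).comp A).comp (proj N)))
        : ellTwo →L[ℂ] ellTwo) : ellTwo →ₗ[ℂ] ellTwo) ≤ ((2 * N : ℕ) : Cardinal) := by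
  rw [ContinuousLinearMap.coe_add]
  refine le_trans (LinearMap.rank_add_le _ _) ?_
  have h1 : LinearMap.rank (((proj N).comp A : ellTwo →L[ℂ] ellTwo) : ellTwo →ₗ[ℂ] ellTwo)
      ≤ (N : Cardinal) := by
    rw [ContinuousLinearMap.toLinearMap_comp]
    exact le_trans (LinearMap.rank_comp_le_left _ _) (rank_proj N)
  have h2 : LinearMap.rank
      (((((1 : ellTwo →L[ℂ] ellTwo) - proj N).comp A).comp (proj N)
        : ellTwo →L[ℂ] ellTwo) : ellTwo →ₗ[ℂ] ellTwo) ≤ (N : Cardinal) := by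
    rw [ContinuousLinearMap.toLinearMap_comp]
    exact le_trans (LinearMap.rank_comp_le_right _ _) (rank_proj N)
  calc _ ≤ (N : Cardinal) + (N : Cardinal) := add_le_add h1 h2
    _ = ((2 * N : ℕ) : Cardinal) := by push_cast; ring

lemma compact_decomp (N : ℕ) (A : ellTwo →L[ℂ] ellTwo) :
    IsCompactOperator (((proj N).comp A
        + ((((1 : ellTwo →L[ℂ] ellTwo) - proj N).comp A).comp (proj N)))
        : ellTwo →L[ℂ] ellTwo) := by
  have h1 : IsCompactOperator ((proj N).comp A : ellTwo →L[ℂ] ellTwo) := by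
    have := (isCompact_proj N).comp_clm A
    convert this using 1
    · rfl
    · rfl
  have h2 : IsCompactOperator
      (((((1 : ellTwo →L[ℂ] ellTwo) - proj N).comp A).comp (proj N))
        : ellTwo →L[ℂ] ellTwo) := by
    have := (isCompact_proj N).clm_comp (((1 : ellTwo →L[ℂ] ellTwo) - proj N).comp A)
    convert this using 1
    · rfl
    · rfl
  have := h1.add h2
  convert this using 1
  · rfl
  · rfl



lemma approx_bddBelow (T : ellTwo →L[ℂ] ellTwo) (n : ℕ) :
    BddBelow {c : ℝ | ∃ F : ellTwo →L[ℂ] ellTwo,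
      LinearMap.rank (F : ellTwo →ₗ[ℂ] ellTwo) ≤ (n : Cardinal) ∧ c = ‖T - F‖} :=
  ⟨0, by rintro c ⟨F, -, rfl⟩; exact norm_nonneg _⟩

lemma approx_nonneg (T : ellTwo →L[ℂ] ellTwo) (n : ℕ) : 0 ≤ approxNumber T n :=
  Real.sInf_nonneg (by rintro c ⟨F, -, rfl⟩; exact norm_nonneg _)

lemma approx_le (T : ellTwo →L[ℂ] ellTwo) (n : ℕ) (F : ellTwo →L[ℂ] ellTwo)
    (hF : LinearMap.rank (F : ellTwo →ₗ[ℂ] ellTwo) ≤ (n : Cardinal)) :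
    approxNumber T n ≤ ‖T - F‖ :=
  csInf_le (approx_bddBelow T n) ⟨F, hF, rfl⟩

lemma approx_antitone (T : ellTwo →L[ℂ] ellTwo) {m n : ℕ} (h : m ≤ n) :
    approxNumber T n ≤ approxNumber T m := by
  refine csInf_le_csInf (approx_bddBelow T n) ⟨‖T - 0‖, 0, ?_, rfl⟩ ?_
  · rw [ContinuousLinearMap.coe_zero, LinearMap.rank_zero]
    exact zero_le
  · rintro c ⟨F, hF, rfl⟩
    exact ⟨F, le_trans hF (by exact_mod_cast Nat.cast_le.mpr h), rfl⟩

lemma blaschke_le_one {a b : ℂ} (ha : ‖a‖ < 1) (hb : ‖b‖ < 1) :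
    ‖(a - b) / (1 - (starRingEnd ℂ) b * a)‖ ≤ 1 := by
  have hu : ‖(starRingEnd ℂ) b * a‖ < 1 := by
    rw [norm_mul, Complex.norm_conj]
    nlinarith [norm_nonneg a, norm_nonneg b]
  have hden : 0 < ‖1 - (starRingEnd ℂ) b * a‖ := by
    have h1 := norm_sub_norm_le (1 : ℂ) ((starRingEnd ℂ) b * a)
    simp only [norm_one] at h1
    have : ‖(1:ℂ)‖ = 1 := by simp
    nlinarith [h1]
  have hkey : Complex.normSq (1 - (starRingEnd ℂ) b * a) - Complex.normSq (a - b)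
      = (1 - Complex.normSq a) * (1 - Complex.normSq b) := by
    simp only [Complex.normSq_apply, Complex.sub_re, Complex.sub_im, Complex.mul_re,
      Complex.mul_im, Complex.one_re, Complex.one_im, Complex.conj_re, Complex.conj_im]
    ring
  have hna : Complex.normSq a < 1 := by
    rw [← Complex.sq_norm]; nlinarith [norm_nonneg a]
  have hnb : Complex.normSq b < 1 := by
    rw [← Complex.sq_norm]; nlinarith [norm_nonneg b]
  have hle : ‖a - b‖ ≤ ‖1 - (starRingEnd ℂ) b * a‖ := by
    rw [Complex.norm_def, Complex.norm_def]
    apply Real.sqrt_le_sqrt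
    nlinarith
  rw [norm_div]
  exact div_le_one_of_le₀ hle (le_of_lt hden)

lemma tprod_le_one_real {f : ℕ → ℝ} (h0 : ∀ i, 0 ≤ f i) (h1 : ∀ i, f i ≤ 1) :
    (∏' i, f i) ≤ 1 := by
  by_cases hm : Multipliable f
  · exact le_of_tendsto hm.hasProd
      (Filter.Eventually.of_forall fun s => Finset.prod_le_one (fun i _ => h0 i) fun i _ => h1 i)
  · rw [tprod_eq_one_of_not_multipliable hm]

lemma double_sum (f : ℕ → ℝ) (n : ℕ) :
    ∑ i ∈ Finset.range (2 * n), f (i / 2) = 2 * ∑ j ∈ Finset.range n, f j := by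
  induction n with
  | zero => simp
  | succ n ih =>
      rw [show 2 * (n + 1) = (2 * n) + 1 + 1 by ring, Finset.sum_range_succ,
        Finset.sum_range_succ, ih, Finset.sum_range_succ]
      have h1 : (2 * n) / 2 = n := by omega
      have h2 : (2 * n + 1) / 2 = n := by omega
      rw [h1, h2]; ring

lemma summable_half (f : ℕ → ℝ) (h0 : ∀ M, 0 ≤ f M) (hf : Summable f) :
    Summable (fun n => f (n / 2)) := by
  refine summable_of_sum_range_le (c := 2 * ∑' M, f M) (fun n => h0 _) ?_
  intro n
  calc ∑ i ∈ Finset.range n, f (i / 2) ≤ ∑ i ∈ Finset.range (2 * n), f (i / 2) := by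
        refine Finset.sum_le_sum_of_subset_of_nonneg
          (Finset.range_subset_range.mpr (by omega)) fun i _ _ => h0 _
    _ = 2 * ∑ j ∈ Finset.range n, f j := double_sum f n
    _ ≤ 2 * ∑' M, f M := by
        have := Summable.sum_le_tsum (Finset.range n) (fun i _ => h0 i) hf
        linarith


end GramAux

open GramAux in
theorem gram_sub_id_schatten_of_summable (α : ℕ → ℂ)
    (hα : ∀ j, ‖α j‖ < 1)
    (d : ℕ → ℝ)
    (hd : ∀ n, d n = ∏' i : ℕ, if i = n then 1 else
      ‖(α i - α n) / (1 - (starRingEnd ℂ) (α n) * α i)‖)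
    (δ : ℝ) (hδ : 0 < δ) (hsep : ∀ n, δ ≤ d n)
    (htends : Filter.Tendsto d Filter.atTop (nhds 1))
    (p : ℝ) (hp2 : 2 ≤ p)
    (hsum : Summable (fun n : ℕ => (1 - d n ^ 2) ^ (p / 2)))
    (G : ellTwo →L[ℂ] ellTwo)
    (hG : ∀ i j : ℕ, (inner ℂ (lp.single 2 i (1:ℂ)) (G (lp.single 2 j (1:ℂ))) : ℂ) =
      gramEntry α i j)
    (GN : ℕ → (ellTwo →L[ℂ] ellTwo))
    (hGN : ∀ N i j : ℕ,
      (inner ℂ (lp.single 2 i (1:ℂ)) (GN N (lp.single 2 j (1:ℂ))) : ℂ) =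
        gramEntry α (i + N) (j + N))
    (C : ℝ)
    (hbound : ∀ N : ℕ, ‖GN N - 1‖ ≤ C * Real.sqrt (1 - d N)) :
    MemSchatten p (G - 1) := by
  -- basic positivity facts
  set C' : ℝ := |C| with hC'def
  have hC' : 0 ≤ C' := abs_nonneg C
  have hbound' : ∀ N : ℕ, ‖GN N - 1‖ ≤ C' * Real.sqrt (1 - d N) := fun N =>
    (hbound N).trans (mul_le_mul_of_nonneg_right (le_abs_self C) (Real.sqrt_nonneg _))
  have hd0 : ∀ n, 0 ≤ d n := fun n => le_of_lt (lt_of_lt_of_le hδ (hsep n))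
  have hd1 : ∀ n, d n ≤ 1 := by
    intro n
    rw [hd n]
    apply tprod_le_one_real
    · intro i
      by_cases h : i = n
      · simp [h]
      · simp only [h, if_false]
        positivity
    · intro i
      by_cases h : i = n
      · simp [h]
      · simpa [h] using blaschke_le_one (hα i) (hα n)
  have hdn1 : ∀ n, 0 ≤ 1 - d n := fun n => by linarith [hd1 n]
  have hdn2 : ∀ n, 0 ≤ 1 - d n ^ 2 := fun n => by nlinarith [hd0 n, hd1 n]
  -- matrix entries of `G - 1` and `GN N - 1`
  have hA : ∀ i j : ℕ, (inner ℂ (ee i) ((G - 1) (ee j)) : ℂ)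
      = gramEntry α i j - (if i = j then 1 else 0) := by
    intro i j
    rw [ContinuousLinearMap.sub_apply, inner_sub_right, ContinuousLinearMap.one_apply,
      inner_ee i (ee j), ee_apply,
      show (inner ℂ (ee i) (G (ee j)) : ℂ) = gramEntry α i j from hG i j]
  have hB : ∀ N i j : ℕ, (inner ℂ (ee i) ((GN N - 1) (ee j)) : ℂ)
      = gramEntry α (i + N) (j + N) - (if i = j then 1 else 0) := by
    intro N i j
    rw [ContinuousLinearMap.sub_apply, inner_sub_right, ContinuousLinearMap.one_apply,
      inner_ee i (ee j), ee_apply,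
      show (inner ℂ (ee i) (GN N (ee j)) : ℂ) = gramEntry α (i + N) (j + N) from hGN N i j]
  -- the finite-rank approximants
  set decomp : ℕ → (ellTwo →L[ℂ] ellTwo) := fun N =>
    (proj N).comp (G - 1)
      + ((((1 : ellTwo →L[ℂ] ellTwo) - proj N).comp (G - 1)).comp (proj N)) with hdecomp
  have hkey : ∀ N, (G - 1) - compress N (GN N - 1) = decomp N := by
    intro N
    apply compress_decomp
    intro i j hi hj
    rw [hA i j, hB N (i - N) (j - N), Nat.sub_add_cancel hi, Nat.sub_add_cancel hj]
    have hiff : (i = j) ↔ (i - N = j - N) := by omega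
    exact congrArg (fun t => gramEntry α i j - t) (if_congr hiff rfl rfl)
  have hRA : ∀ N, (G - 1) - decomp N = compress N (GN N - 1) := by
    intro N
    rw [← hkey N, sub_sub_cancel]
  have hnormle : ∀ N, ‖(G - 1) - decomp N‖ ≤ C' * Real.sqrt (1 - d N) := by
    intro N
    rw [hRA N]
    exact (norm_compress_le _ _).trans (hbound' N)
  -- compactness
  have hsqrt0 : Filter.Tendsto (fun N => C' * Real.sqrt (1 - d N)) Filter.atTop (nhds 0) := by
    have h1 : Filter.Tendsto (fun N => 1 - d N) Filter.atTop (nhds 0) := by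
      have := (tendsto_const_nhds (x := (1:ℝ)) (f := Filter.atTop (α := ℕ))).sub htends
      simpa using this
    have h2 : Filter.Tendsto (fun N => Real.sqrt (1 - d N)) Filter.atTop (nhds 0) := by
      have := (Real.continuous_sqrt.tendsto 0).comp h1
      simpa [Function.comp_def] using this
    simpa using h2.const_mul C'
  have hcompact : IsCompactOperator (⇑(G - 1) : ellTwo → ellTwo) := by
    have hnorm0 : Filter.Tendsto (fun N => ‖decomp N - (G - 1)‖) Filter.atTop (nhds 0) :=
      squeeze_zero (fun _ => norm_nonneg _)
        (fun N => by rw [norm_sub_rev]; exact hnormle N) hsqrt0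
    have htendA : Filter.Tendsto decomp Filter.atTop (nhds (G - 1)) :=
      tendsto_iff_norm_sub_tendsto_zero.mpr hnorm0
    exact isCompactOperator_of_tendsto htendA
      (Filter.Eventually.of_forall fun N => compact_decomp N (G - 1))
  -- the approximation number bound
  have happrox : ∀ N : ℕ, approxNumber (G - 1) (2 * N) ≤ C' * Real.sqrt (1 - d N) := by
    intro N
    exact le_trans (approx_le (G - 1) (2 * N) (decomp N) (rank_decomp N (G - 1))) (hnormle N)
  -- summability
  have hp0 : (0:ℝ) ≤ p := by linarith
  have hsq : ∀ s : ℝ, 0 ≤ s → Real.sqrt s ^ p = s ^ (p / 2) := by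
    intro s hs
    rw [Real.sqrt_eq_rpow, ← Real.rpow_mul hs]
    congr 1
    ring
  have hstep : ∀ n : ℕ, approxNumber (G - 1) n ^ p
      ≤ C' ^ p * (1 - d (n / 2) ^ 2) ^ (p / 2) := by
    intro n
    set M := n / 2 with hM
    have h1 : approxNumber (G - 1) n ≤ approxNumber (G - 1) (2 * M) :=
      approx_antitone (G - 1) (by omega)
    have h2 : approxNumber (G - 1) n ≤ C' * Real.sqrt (1 - d M) := h1.trans (happrox M)
    have h3 : approxNumber (G - 1) n ^ p ≤ (C' * Real.sqrt (1 - d M)) ^ p :=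
      Real.rpow_le_rpow (approx_nonneg _ _) h2 hp0
    have h4 : (C' * Real.sqrt (1 - d M)) ^ p = C' ^ p * (1 - d M) ^ (p / 2) := by
      rw [Real.mul_rpow hC' (Real.sqrt_nonneg _), hsq _ (hdn1 M)]
    have h5 : (1 - d M) ^ (p / 2) ≤ (1 - d M ^ 2) ^ (p / 2) :=
      Real.rpow_le_rpow (hdn1 M) (by nlinarith [hd0 M, hd1 M]) (by linarith)
    calc approxNumber (G - 1) n ^ p ≤ (C' * Real.sqrt (1 - d M)) ^ p := h3
      _ = C' ^ p * (1 - d M) ^ (p / 2) := h4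
      _ ≤ C' ^ p * (1 - d M ^ 2) ^ (p / 2) :=
          mul_le_mul_of_nonneg_left h5 (Real.rpow_nonneg hC' p)
  have hsum2 : Summable (fun n : ℕ => C' ^ p * (1 - d (n / 2) ^ 2) ^ (p / 2)) := by
    have hf : Summable (fun M : ℕ => C' ^ p * (1 - d M ^ 2) ^ (p / 2)) := hsum.mul_left _
    exact summable_half (fun M : ℕ => C' ^ p * (1 - d M ^ 2) ^ (p / 2))
      (fun M => mul_nonneg (Real.rpow_nonneg hC' p) (Real.rpow_nonneg (hdn2 M) _)) hf
  refine ⟨hcompact, ?_⟩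
  exact Summable.of_nonneg_of_le (fun n => Real.rpow_nonneg (approx_nonneg _ _) p) hstep hsum2
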